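/- If f : ℝⁿ → ℝ is strictly convex, differentiable, and 1-coercive, then for every y ∈ ℝⁿ the supremum in the definition of the conjugate is attained at a unique point, and ∇f*(y) = argmax_x (⟨y,x⟩ − f(x)). -/

import Mathlib

open Filter Set RealInnerProductSpace

noncomputable def fenchel {n : ℕ} (f : EuclideanSpace ℝ (Fin n) → ℝ)
    (y : EuclideanSpace ℝ (Fin n)) : ℝ :=
  sSup (Set.range fun x => ⟪y, x⟫ - f x)

def Coercive1 {n : ℕ} (f : EuclideanSpace ℝ (Fin n) → ℝ) : Prop :=
  Tendsto (fun x => f x / ‖x‖) (Filter.comap norm Filter.atTop) Filter.atTop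

theorem stmt5 {n : ℕ} (f : EuclideanSpace ℝ (Fin n) → ℝ)
    (hsc : StrictConvexOn ℝ Set.univ f) (hdiff : Differentiable ℝ f)
    (hcoer : Coercive1 f) :
    (∀ y, ∃! x, ∀ z, ⟪y, z⟫ - f z ≤ ⟪y, x⟫ - f x) ∧
    ∃ g : EuclideanSpace ℝ (Fin n) → EuclideanSpace ℝ (Fin n),
      (∀ y, HasGradientAt (fenchel f) (g y) y) ∧
      ∀ y z, ⟪y, z⟫ - f z ≤ ⟪y, g y⟫ - f (g y) := by
  have hcont : Continuous f := hdiff.continuous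
  -- coercivity in usable form
  have hco : ∀ c : ℝ, ∃ R : ℝ, ∀ x, R ≤ ‖x‖ → c * ‖x‖ ≤ f x := by
    intro c
    have h := hcoer.eventually (eventually_ge_atTop c)
    rw [eventually_comap] at h
    obtain ⟨R, hR⟩ := eventually_atTop.mp h
    refine ⟨max R 1, fun x hx => ?_⟩
    have hxpos : (0:ℝ) < ‖x‖ := lt_of_lt_of_le one_pos (le_trans (le_max_right R 1) hx)
    have h2 : c ≤ f x / ‖x‖ := hR ‖x‖ (le_trans (le_max_left R 1) hx) x rfl
    exact (le_div_iff₀ hxpos).mp h2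
  -- existence of maximizer
  have hmax : ∀ y, ∃ x, ∀ z, ⟪y, z⟫ - f z ≤ ⟪y, x⟫ - f x := by
    intro y
    obtain ⟨R, hR⟩ := hco (‖y‖ + 1)
    set M : ℝ := max R (f 0) with hM
    set S : Set (EuclideanSpace ℝ (Fin n)) := {x | -f 0 ≤ ⟪y, x⟫ - f x} with hS
    have hSsub : S ⊆ Metric.closedBall 0 M := by
      intro x hx
      rw [Metric.mem_closedBall, dist_zero_right]
      rcases le_total ‖x‖ R with h | h
      · exact le_trans h (le_max_left _ _)
      · have h2 := hR x h
        have h3 : ⟪y, x⟫ ≤ ‖y‖ * ‖x‖ := real_inner_le_norm _ _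
        have hx' : -f 0 ≤ ⟪y, x⟫ - f x := hx
        have : ‖x‖ ≤ f 0 := by nlinarith [norm_nonneg x]
        exact le_trans this (le_max_right _ _)
    have hScl : IsClosed S := by
      have : Continuous fun x => ⟪y, x⟫ - f x :=
        (continuous_const.inner continuous_id).sub hcont
      exact isClosed_le continuous_const this
    have hScomp : IsCompact S :=
      (isCompact_closedBall (0 : EuclideanSpace ℝ (Fin n)) M).of_isClosed_subset hScl hSsub
    have h0S : (0 : EuclideanSpace ℝ (Fin n)) ∈ S := by
      simp [hS, inner_zero_right]
    obtain ⟨x, hxS, hxmax⟩ := hScomp.exists_isMaxOn ⟨0, h0S⟩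
      (((continuous_const.inner continuous_id).sub hcont).continuousOn)
    refine ⟨x, fun z => ?_⟩
    by_cases hz : z ∈ S
    · exact hxmax hz
    · have h1 : ⟪y, z⟫ - f z < -f 0 := by
        simp only [hS, mem_setOf_eq, not_le] at hz; exact hz
      have h2 : -f 0 ≤ ⟪y, x⟫ - f x := by
        have h := hxmax h0S
        simp only [Pi.sub_apply, mem_setOf_eq, id_eq, inner_zero_right, zero_sub] at h
        exact h
      linarith
  -- uniqueness
  have huniq : ∀ y x₁ x₂, (∀ z, ⟪y, z⟫ - f z ≤ ⟪y, x₁⟫ - f x₁) →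
      (∀ z, ⟪y, z⟫ - f z ≤ ⟪y, x₂⟫ - f x₂) → x₁ = x₂ := by
    intro y x₁ x₂ h1 h2
    by_contra hne
    have hlt := hsc.2 (mem_univ x₁) (mem_univ x₂) hne
      (by norm_num : (0:ℝ) < 1/2) (by norm_num : (0:ℝ) < 1/2) (by norm_num)
    have e1 := h1 x₂
    have e2 := h2 x₁
    have hm := h1 ((1/2 : ℝ) • x₁ + (1/2 : ℝ) • x₂)
    have hi : ⟪y, (1/2 : ℝ) • x₁ + (1/2 : ℝ) • x₂⟫ = 1/2 * ⟪y, x₁⟫ + 1/2 * ⟪y, x₂⟫ := by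
      rw [inner_add_right, real_inner_smul_right, real_inner_smul_right]
    rw [hi] at hm
    rw [smul_eq_mul, smul_eq_mul] at hlt
    linarith
  classical
  choose g hg using hmax
  -- fenchel value
  have hfen : ∀ y, fenchel f y = ⟪y, g y⟫ - f (g y) := by
    intro y
    refine IsGreatest.csSup_eq ⟨⟨g y, rfl⟩, ?_⟩
    rintro v ⟨x, rfl⟩
    exact hg y x
  -- continuity of argmax
  have hgcont : ∀ y, ∀ ε > (0:ℝ), ∃ δ > (0:ℝ), ∀ z, ‖z - y‖ < δ → ‖g z - g y‖ < ε := by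
    intro y ε hε
    by_contra hcon
    push_neg at hcon
    obtain ⟨R, hR⟩ := hco (‖y‖ + 2)
    have hbound : ∀ z, ‖z - y‖ ≤ 1 → ‖g z‖ ≤ max R (f 0) := by
      intro z hz
      have h0 : - f 0 ≤ ⟪z, g z⟫ - f (g z) := by
        have h := hg z 0
        simp only [inner_zero_right, zero_sub] at h
        exact h
      have hzn : ‖z‖ ≤ ‖y‖ + 1 := by
        calc ‖z‖ = ‖(z - y) + y‖ := by rw [sub_add_cancel]
          _ ≤ ‖z - y‖ + ‖y‖ := norm_add_le _ _
          _ ≤ ‖y‖ + 1 := by linarith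
      rcases le_total ‖g z‖ R with h | h
      · exact le_trans h (le_max_left _ _)
      · have h2 := hR (g z) h
        have h3 : ⟪z, g z⟫ ≤ ‖z‖ * ‖g z‖ := real_inner_le_norm _ _
        have : ‖g z‖ ≤ f 0 := by nlinarith [norm_nonneg (g z)]
        exact le_trans this (le_max_right _ _)
    choose zs hz1 hz2 using fun k : ℕ => hcon (1 / (k + 1)) (by positivity)
    have hzy : Tendsto zs atTop (nhds y) := by
      rw [tendsto_iff_norm_sub_tendsto_zero]
      refine squeeze_zero (fun k => norm_nonneg _) (fun k => le_of_lt (hz1 k)) ?_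
      exact tendsto_one_div_add_atTop_nhds_zero_nat
    have hle1 : ∀ k : ℕ, ‖zs k - y‖ ≤ 1 := by
      intro k
      refine le_of_lt (lt_of_lt_of_le (hz1 k) ?_)
      rw [div_le_one (by positivity)]
      linarith [Nat.cast_nonneg (α := ℝ) k]
    have hin : ∀ k : ℕ, g (zs k) ∈ Metric.closedBall (0 : EuclideanSpace ℝ (Fin n)) (max R (f 0)) := by
      intro k
      rw [Metric.mem_closedBall, dist_zero_right]
      exact hbound _ (hle1 k)
    obtain ⟨xs, _, φ, hφ, hxt⟩ :=
      (isCompact_closedBall (0 : EuclideanSpace ℝ (Fin n)) (max R (f 0))).tendsto_subseq hin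
    have hzyφ : Tendsto (zs ∘ φ) atTop (nhds y) := hzy.comp hφ.tendsto_atTop
    have hxmax : ∀ w, ⟪y, w⟫ - f w ≤ ⟪y, xs⟫ - f xs := by
      intro w
      refine le_of_tendsto_of_tendsto' (b := (atTop : Filter ℕ))
        (f := fun k => ⟪zs (φ k), w⟫ - f w)
        (g := fun k => ⟪zs (φ k), g (zs (φ k))⟫ - f (g (zs (φ k)))) ?_ ?_
        (fun k => hg (zs (φ k)) w)
      · exact (hzyφ.inner tendsto_const_nhds).sub tendsto_const_nhds
      · exact (hzyφ.inner hxt).sub ((hcont.tendsto _).comp hxt)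
    have hxeq : xs = g y := huniq y xs (g y) hxmax (hg y)
    have hnt : Tendsto (fun k => ‖g (zs (φ k)) - g y‖) atTop (nhds ‖xs - g y‖) :=
      (hxt.sub tendsto_const_nhds).norm
    have hge : ε ≤ ‖xs - g y‖ :=
      ge_of_tendsto hnt (Eventually.of_forall fun k => hz2 (φ k))
    rw [hxeq, sub_self, norm_zero] at hge
    linarith
  constructor
  · intro y
    exact ⟨g y, hg y, fun x hx => huniq y x (g y) hx (hg y)⟩
  · refine ⟨g, fun y => ?_, fun y z => hg y z⟩
    rw [hasGradientAt_iff_isLittleO, Asymptotics.isLittleO_iff]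
    intro c hc
    obtain ⟨δ, hδ, hδ2⟩ := hgcont y c hc
    rw [Metric.eventually_nhds_iff]
    refine ⟨δ, hδ, fun z hz => ?_⟩
    rw [dist_eq_norm] at hz
    have h3 : ‖g z - g y‖ < c := hδ2 z hz
    have hinner : ⟪z - y, g z - g y⟫ =
        ⟪z, g z⟫ - ⟪z, g y⟫ - ⟪y, g z⟫ + ⟪y, g y⟫ := by
      simp [inner_sub_left, inner_sub_right]; ring
    have hgyzy : ⟪g y, z - y⟫ = ⟪z, g y⟫ - ⟪y, g y⟫ := by
      rw [real_inner_comm, inner_sub_left]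
    have h1 : fenchel f z - fenchel f y - ⟪g y, z - y⟫ ≤ ⟪z - y, g z - g y⟫ := by
      rw [hfen z, hfen y, hgyzy, hinner]
      have := hg y (g z)
      linarith
    have h0 : 0 ≤ fenchel f z - fenchel f y - ⟪g y, z - y⟫ := by
      rw [hfen z, hfen y, hgyzy]
      have := hg z (g y)
      linarith
    have h2 : ⟪z - y, g z - g y⟫ ≤ ‖z - y‖ * ‖g z - g y‖ := real_inner_le_norm _ _
    rw [Real.norm_of_nonneg h0]
    calc fenchel f z - fenchel f y - ⟪g y, z - y⟫ ≤ ‖z - y‖ * ‖g z - g y‖ := le_trans h1 h2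
      _ ≤ c * ‖z - y‖ := by nlinarith [norm_nonneg (z - y)]
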